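/- Let (M,d) be a metric space, X a normed space, α ≥ 0 and a ∈ M. Let φ : M ⇉ X be a convex-valued lower hemicontinuous correspondence that is lower pointwise (α+ε)-Lipschitz at a for every ε > 0. Then for every y ∈ φ(a) and every ε > 0, the correspondence ψ : M ⇉ X defined by ψ(b) := φ(b) ∩ { x ∈ X : ‖x − y‖ ≤ (α+ε)·d(a,b) } is lower hemicontinuous; moreover ψ is convex-valued and non-empty-valued. -/

import Mathlib

open Filter Metric Set

/-- `f` is pointwise `α`-Lipschitz at `b`:
`limsup_{r→0⁺} ( r⁻¹ · sup { d(f b, f a) : a ∈ closedBall b r } ) ≤ α`. -/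
noncomputable def PtwiseLipschitzAt {M X : Type*} [PseudoMetricSpace M] [PseudoMetricSpace X]
    (f : M → X) (α : ℝ) (b : M) : Prop :=
  Filter.limsup
    (fun r : ℝ => (ENNReal.ofReal r)⁻¹ * ⨆ a ∈ Metric.closedBall b r, edist (f b) (f a))
    (nhdsWithin 0 (Set.Ioi 0)) ≤ ENNReal.ofReal α

/-- Lower hemicontinuity of a correspondence `φ : M ⇉ X`. -/
def LowerHemicontinuousCorr {M X : Type*} [TopologicalSpace M] [TopologicalSpace X]
    (φ : M → Set X) : Prop :=
  ∀ a : M, ∀ U : Set X, IsOpen U → (φ a ∩ U).Nonempty →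
    ∃ V : Set M, IsOpen V ∧ a ∈ V ∧ ∀ v ∈ V, (φ v ∩ U).Nonempty

/-- `φ` is lower pointwise `l`-Lipschitz at `b`. -/
def LowerPtwiseLipschitzAt {M X : Type*} [MetricSpace M] [NormedAddCommGroup X]
    (φ : M → Set X) (l : ℝ) (b : M) : Prop :=
  ∀ y ∈ φ b, ∀ a : M, (φ a ∩ {x : X | ‖x - y‖ ≤ l * dist b a}).Nonempty

/-- `φ` is lower pointwise `l`-Lipschitz. -/
def LowerPtwiseLipschitz {M X : Type*} [MetricSpace M] [NormedAddCommGroup X]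
    (φ : M → Set X) (l : ℝ) : Prop :=
  ∀ b : M, LowerPtwiseLipschitzAt φ l b

lemma smul_norm_aux {X : Type*} [NormedAddCommGroup X] [NormedSpace ℝ X]
    (u w : X) (t : ℝ) (h0 : 0 ≤ t) (h1 : t ≤ 1) :
    ‖(1 - t) • u + t • w‖ ≤ (1 - t) * ‖u‖ + t * ‖w‖ := by
  calc ‖(1 - t) • u + t • w‖ ≤ ‖(1 - t) • u‖ + ‖t • w‖ := norm_add_le _ _
    _ = (1 - t) * ‖u‖ + t * ‖w‖ := by
        rw [norm_smul, norm_smul, Real.norm_eq_abs, Real.norm_eq_abs,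
          abs_of_nonneg (by linarith), abs_of_nonneg h0]

/-- If `φ` is a convex-valued lower hemicontinuous correspondence that is lower pointwise
`(α+ε)`-Lipschitz at `a` for every `ε > 0`, then for `y ∈ φ a` and `ε > 0` the
correspondence `b ↦ φ b ∩ closedBall y ((α+ε)·d(a,b))` is lower hemicontinuous,
convex-valued and non-empty-valued. -/
theorem stmt12 {M X : Type*} [MetricSpace M] [NormedAddCommGroup X] [NormedSpace ℝ X]
    (α : ℝ) (hα : 0 ≤ α) (a : M) (φ : M → Set X)
    (hcv : ∀ b, Convex ℝ (φ b)) (hlh : LowerHemicontinuousCorr φ)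
    (hlip : ∀ ε : ℝ, 0 < ε → LowerPtwiseLipschitzAt φ (α + ε) a)
    (y : X) (hy : y ∈ φ a) (ε : ℝ) (hε : 0 < ε) :
    LowerHemicontinuousCorr (fun b => φ b ∩ {x : X | ‖x - y‖ ≤ (α + ε) * dist a b}) ∧
    (∀ b, Convex ℝ (φ b ∩ {x : X | ‖x - y‖ ≤ (α + ε) * dist a b})) ∧
    (∀ b, (φ b ∩ {x : X | ‖x - y‖ ≤ (α + ε) * dist a b}).Nonempty) := by
  have hαε : (0:ℝ) < α + ε := by linarith
  have hball : ∀ ρ : ℝ, Convex ℝ {x : X | ‖x - y‖ ≤ ρ} := by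
    intro ρ
    have h : {x : X | ‖x - y‖ ≤ ρ} = Metric.closedBall y ρ := by
      ext x; simp [dist_eq_norm]
    rw [h]; exact convex_closedBall y ρ
  refine ⟨?_, fun b => (hcv b).inter (hball _), fun b => hlip ε hε y hy b⟩
  intro b U hU hne
  obtain ⟨z, ⟨⟨hzφ, hzb⟩, hzU⟩⟩ := hne
  obtain ⟨ρ, hρ, hρU⟩ := Metric.isOpen_iff.mp hU z hzU
  by_cases hba : b = a
  · subst hba
    have hzy : z = y := by
      have h0 : ‖z - y‖ ≤ 0 := by simpa using hzb
      have h1 : z - y = 0 := norm_le_zero_iff.mp h0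
      exact sub_eq_zero.mp h1
    refine ⟨Metric.ball b (ρ / (α + ε)), Metric.isOpen_ball,
      Metric.mem_ball_self (by positivity), ?_⟩
    intro v hv
    obtain ⟨x, hxφ, hx⟩ := hlip ε hε y hy v
    refine ⟨x, ⟨hxφ, hx⟩, hρU ?_⟩
    rw [Metric.mem_ball, hzy, dist_eq_norm]
    have hdav : dist b v < ρ / (α + ε) := Metric.mem_ball'.mp hv
    calc ‖x - y‖ ≤ (α + ε) * dist b v := hx
      _ < (α + ε) * (ρ / (α + ε)) := by
          exact mul_lt_mul_of_pos_left hdav hαε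
      _ = ρ := by field_simp
  · -- b ≠ a
    set D := dist a b with hDdef
    have hD : 0 < D := dist_pos.mpr (Ne.symm hba)
    set r := (α + ε) * D with hrdef
    have hr0 : 0 < r := by positivity
    set K := (α + ε/2) * (D + 1) + r + 1 with hKdef
    have hK0 : 0 < K := by
      have h1 : 0 < (α + ε/2) * (D + 1) := mul_pos (by linarith) (by linarith)
      rw [hKdef]; linarith
    set t := min (1/2 : ℝ) (ρ / (4 * K)) with ht
    have ht0 : 0 < t := lt_min (by norm_num) (by positivity)
    have ht1 : t ≤ 1/2 := min_le_left _ _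
    have htK : t * K ≤ ρ / 4 := by
      have h := min_le_right (1/2 : ℝ) (ρ / (4 * K))
      calc t * K ≤ (ρ / (4 * K)) * K := mul_le_mul_of_nonneg_right h hK0.le
        _ = ρ / 4 := by field_simp
    set m := t * ε * D / 4 with hm
    have hm0 : 0 < m := by positivity
    set δ := min (ρ/2) (m/2) with hδ
    have hδ0 : 0 < δ := lt_min (by positivity) (by positivity)
    have hδρ : δ ≤ ρ/2 := min_le_left _ _
    have hδm : δ ≤ m/2 := min_le_right _ _
    set η := min (min 1 (D/2)) (m / (2 * (α + ε))) with hη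
    have hη0 : 0 < η := lt_min (lt_min one_pos (by positivity)) (by positivity)
    have hη1 : η ≤ 1 := le_trans (min_le_left _ _) (min_le_left _ _)
    have hηD : η ≤ D/2 := le_trans (min_le_left _ _) (min_le_right _ _)
    have hηm : (α + ε) * η ≤ m/2 := by
      have h : η ≤ m / (2 * (α + ε)) := min_le_right _ _
      calc (α + ε) * η ≤ (α + ε) * (m / (2 * (α + ε))) :=
            mul_le_mul_of_nonneg_left h hαε.le
        _ = m/2 := by field_simp
    clear_value D r K t m δ η
    obtain ⟨V₀, hV₀o, hbV₀, hV₀⟩ := hlh b (Metric.ball z δ) Metric.isOpen_ball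
      ⟨z, hzφ, Metric.mem_ball_self hδ0⟩
    refine ⟨V₀ ∩ Metric.ball b η, hV₀o.inter Metric.isOpen_ball,
      ⟨hbV₀, Metric.mem_ball_self hη0⟩, ?_⟩
    rintro v ⟨hvV₀, hvb⟩
    obtain ⟨xv, hxφ, hxz⟩ := hV₀ v hvV₀
    obtain ⟨yv, hyφ, hyv⟩ := hlip (ε/2) (by positivity) y hy v
    have hxz' : ‖xv - z‖ < δ := by rw [← dist_eq_norm]; exact hxz
    have hyv' : ‖yv - y‖ ≤ (α + ε/2) * dist a v := hyv
    set dv := dist a v with hdv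
    have hbv : dist b v < η := Metric.mem_ball'.mp hvb
    have hdv1 : D - η ≤ dv := by
      have h := dist_triangle a v b
      have h2 : dist v b < η := by rw [dist_comm]; exact hbv
      rw [hdv]; rw [hDdef]; linarith [h]
    have hdv2 : dv ≤ D + η := by
      have h := dist_triangle a b v
      rw [hdv]; rw [hDdef]; linarith
    clear_value dv
    set c := (1 - t) • xv + t • yv with hc
    have hcφ : c ∈ φ v := hcv v hxφ hyφ (by linarith) ht0.le (by ring)
    have hcy : c - y = (1 - t) • (xv - y) + t • (yv - y) := by
      rw [hc]; module
    have hcz : c - z = (1 - t) • (xv - z) + t • (yv - z) := by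
      rw [hc]; module
    clear_value c
    have hb1 : ‖c - y‖ ≤ (1 - t) * ‖xv - y‖ + t * ‖yv - y‖ := by
      rw [hcy]; exact smul_norm_aux _ _ t ht0.le (by linarith)
    have hb2 : ‖c - z‖ ≤ (1 - t) * ‖xv - z‖ + t * ‖yv - z‖ := by
      rw [hcz]; exact smul_norm_aux _ _ t ht0.le (by linarith)
    have hxy : ‖xv - y‖ ≤ δ + r := by
      have h : xv - y = (xv - z) + (z - y) := by abel
      calc ‖xv - y‖ ≤ ‖xv - z‖ + ‖z - y‖ := by rw [h]; exact norm_add_le _ _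
        _ ≤ δ + r := by
            have : ‖z - y‖ ≤ r := hzb
            linarith [hxz'.le]
    have hdvhalf : D/2 ≤ dv := by linarith
    have he2 : m ≤ t * (ε/2 * dv) := by
      have h1 : ε/2 * (D/2) ≤ ε/2 * dv := mul_le_mul_of_nonneg_left hdvhalf (by linarith)
      calc m = t * (ε/2 * (D/2)) := by rw [hm]; ring
        _ ≤ t * (ε/2 * dv) := mul_le_mul_of_nonneg_left h1 ht0.le
    have hX : -m ≤ (α + ε) * dv - δ - r := by
      have h1 : (α + ε) * (D - η) ≤ (α + ε) * dv := mul_le_mul_of_nonneg_left hdv1 hαε.le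
      have h2 : (α + ε) * (D - η) = r - (α + ε) * η := by rw [hrdef]; ring
      linarith
    have key : (1 - t) * (δ + r) + t * ((α + ε/2) * dv) ≤ (α + ε) * dv := by
      have h1 : (1 - t) * (-m) ≤ (1 - t) * ((α + ε) * dv - δ - r) :=
        mul_le_mul_of_nonneg_left hX (by linarith)
      have h2 : 0 ≤ t * m := mul_nonneg ht0.le hm0.le
      have h3 : (1 - t) * (-m) = -m + t * m := by ring
      have hid : (α + ε) * dv - ((1 - t) * (δ + r) + t * ((α + ε/2) * dv))
          = (1 - t) * ((α + ε) * dv - δ - r) + t * (ε/2 * dv) := by ring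
      linarith [he2]
    refine ⟨c, ⟨hcφ, ?_⟩, hρU ?_⟩
    · show ‖c - y‖ ≤ (α + ε) * dist a v
      rw [← hdv]
      have h1 : (1 - t) * ‖xv - y‖ ≤ (1 - t) * (δ + r) :=
        mul_le_mul_of_nonneg_left hxy (by linarith)
      have h2 : t * ‖yv - y‖ ≤ t * ((α + ε/2) * dv) :=
        mul_le_mul_of_nonneg_left hyv' ht0.le
      linarith
    · rw [Metric.mem_ball, dist_eq_norm]
      have hyz : ‖yv - z‖ ≤ K := by
        have h : yv - z = (yv - y) + (y - z) := by abel
        have h2 : ‖y - z‖ ≤ r := by rw [norm_sub_rev]; exact hzb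
        have h3 : ‖yv - z‖ ≤ ‖yv - y‖ + ‖y - z‖ := by rw [h]; exact norm_add_le _ _
        have h4 : (α + ε/2) * dv ≤ (α + ε/2) * (D + 1) :=
          mul_le_mul_of_nonneg_left (by linarith) (by linarith)
        rw [hKdef]; linarith
      have h5 : (1 - t) * ‖xv - z‖ ≤ ‖xv - z‖ :=
        mul_le_of_le_one_left (norm_nonneg _) (by linarith)
      have h6 : t * ‖yv - z‖ ≤ t * K := mul_le_mul_of_nonneg_left hyz ht0.le
      have h7 : ‖c - z‖ ≤ ‖xv - z‖ + t * K := by linarith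
      have h8 : ‖xv - z‖ + t * K < δ + ρ / 4 := by linarith
      have h9 : δ + ρ / 4 < ρ := by linarith
      linarith
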